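/- Graph state reduction to a Bell state: let G be a graph, let i, j be adjacent vertices, and project every vertex in ν_{i,j} (the set of neighbors of i or j other than i, j) onto σ_z eigenstates with outcomes recorded; the remaining (renormalized) state of qubits i and j is (σ_z^{m_i} ⊗ σ_z^{m_j})(|0+⟩ + |1−⟩)/√2 up to sign, where m_i (resp. m_j) is the number of neighbors of i (excluding j) (resp. of j excluding i) that were projected onto the −1 eigenstate |1⟩, and all other projected qubits are in definite σ_z eigenstates. In particular, each σ_z outcome string on ν_{i,j} occurs with probability 1/2^{|ν_{i,j}|}. -/
import Mathlib


/-- The graph state of G, (1/√(2^N)) Σ_i (−1)^{μ(i)} |i⟩, where μ(i) is the number of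
edges both of whose endpoints are 1 in the string i. -/
noncomputable def graphStateCF (N : ℕ) (G : SimpleGraph (Fin N)) [DecidableRel G.Adj] :
    (Fin N → Fin 2) → ℂ := fun f =>
  (1 / Real.sqrt (2 ^ N) : ℂ) *
    (-1 : ℂ) ^ (Finset.univ.filter
      (fun p : Fin N × Fin N =>
        p.1 < p.2 ∧ G.Adj p.1 p.2 ∧ f p.1 = 1 ∧ f p.2 = 1)).card

/-- Auxiliary edge indicator. -/
def stmt17eN {N : ℕ} (G : SimpleGraph (Fin N)) [DecidableRel G.Adj] (u v : Fin N) : ℕ :=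
  if u < v ∧ G.Adj u v then 1 else 0

lemma stmt17_fin2_ite (a b : Fin 2) :
    (if a = 1 ∧ b = 1 then (1:ℕ) else 0) = (a : ℕ) * (b : ℕ) := by revert a b; decide

lemma stmt17_fin2_ite1 (a : Fin 2) :
    (if a = 1 then (1:ℕ) else 0) = (a : ℕ) := by revert a; decide

/-- Key combinatorial parity decomposition of the edge count. -/
lemma stmt17_key (N : ℕ) (G : SimpleGraph (Fin N)) [DecidableRel G.Adj]
    (i j : Fin N) (hij : G.Adj i j) (t f : Fin N → Fin 2)
    (hft : ∀ v, v ≠ i → v ≠ j → f v = t v) :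
    (Finset.univ.filter
      (fun p : Fin N × Fin N =>
        p.1 < p.2 ∧ G.Adj p.1 p.2 ∧ f p.1 = 1 ∧ f p.2 = 1)).card
    = (∑ u ∈ Finset.univ \ ({i, j} : Finset (Fin N)),
        ∑ v ∈ Finset.univ \ ({i, j} : Finset (Fin N)),
          stmt17eN G u v * ((t u : ℕ) * (t v : ℕ)))
      + (Finset.univ.filter (fun v : Fin N => G.Adj i v ∧ v ≠ j ∧ t v = 1)).card * (f i : ℕ)
      + (Finset.univ.filter (fun v : Fin N => G.Adj j v ∧ v ≠ i ∧ t v = 1)).card * (f j : ℕ)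
      + (f i : ℕ) * (f j : ℕ) := by
  classical
  have hne : i ≠ j := hij.ne
  set R : Finset (Fin N) := Finset.univ \ ({i, j} : Finset (Fin N)) with hR
  have hmemR : ∀ v : Fin N, v ∈ R ↔ v ≠ i ∧ v ≠ j := by
    intro v; simp [hR]
  set F : Fin N → Fin N → ℕ := fun u v => stmt17eN G u v * ((f u : ℕ) * (f v : ℕ)) with hF
  have stepA : (Finset.univ.filter
      (fun p : Fin N × Fin N =>
        p.1 < p.2 ∧ G.Adj p.1 p.2 ∧ f p.1 = 1 ∧ f p.2 = 1)).card
      = ∑ u : Fin N, ∑ v : Fin N, F u v := by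
    rw [Finset.card_filter, Fintype.sum_prod_type]
    refine Finset.sum_congr rfl fun u _ => Finset.sum_congr rfl fun v _ => ?_
    by_cases h : u < v ∧ G.Adj u v
    · simp only [hF, stmt17eN, h.1, h.2, if_true, true_and, one_mul]
      exact stmt17_fin2_ite _ _
    · rw [if_neg (fun hc => h ⟨hc.1, hc.2.1⟩)]
      simp [hF, stmt17eN, h]
  rw [stepA]
  have hiI : i ∉ insert j R := by simp [hmemR, hne]
  have hjR : j ∉ R := by simp [hmemR]
  have huniv : (Finset.univ : Finset (Fin N)) = insert i (insert j R) := by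
    ext v
    simp only [Finset.mem_univ, true_iff, Finset.mem_insert, hmemR]
    by_cases h1 : v = i
    · tauto
    · by_cases h2 : v = j <;> tauto
  have split : ∀ (S : Fin N → ℕ), ∑ v : Fin N, S v = S i + S j + ∑ v ∈ R, S v := by
    intro S
    rw [huniv, Finset.sum_insert hiI, Finset.sum_insert hjR]
    ring
  rw [split (fun u => ∑ v : Fin N, F u v)]
  rw [split (F i), split (F j)]
  have hRsplit : ∑ u ∈ R, ∑ v : Fin N, F u v
      = ∑ u ∈ R, F u i + ∑ u ∈ R, F u j + ∑ u ∈ R, ∑ v ∈ R, F u v := by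
    rw [← Finset.sum_add_distrib, ← Finset.sum_add_distrib]
    exact Finset.sum_congr rfl fun u _ => split (F u)
  rw [hRsplit]
  have hFii : F i i = 0 := by simp [hF, stmt17eN]
  have hFjj : F j j = 0 := by simp [hF, stmt17eN]
  have hD : F i j + F j i = (f i : ℕ) * (f j : ℕ) := by
    rcases lt_trichotomy i j with h | h | h
    · simp [hF, stmt17eN, h, not_lt.mpr h.le, hij, hij.symm]
    · exact absurd h hne
    · simp [hF, stmt17eN, h, not_lt.mpr h.le, hij, hij.symm, mul_comm]
  have hpair : ∀ x v : Fin N, v ≠ x →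
      stmt17eN G x v + stmt17eN G v x = if G.Adj x v then 1 else 0 := by
    intro x v hvx
    rcases lt_trichotomy x v with h | h | h
    · simp [stmt17eN, h, not_lt.mpr h.le]
    · exact absurd h.symm hvx
    · simp only [stmt17eN, not_lt.mpr h.le, false_and, if_false, h, true_and, zero_add]
      by_cases ha : G.Adj x v
      · rw [if_pos ha.symm, if_pos ha]
      · rw [if_neg (fun h' => ha h'.symm), if_neg ha]
  have hM : ∀ x y : Fin N, (x = i ∧ y = j) ∨ (x = j ∧ y = i) →
      ∑ v ∈ R, F x v + ∑ v ∈ R, F v x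
        = (Finset.univ.filter (fun v : Fin N => G.Adj x v ∧ v ≠ y ∧ t v = 1)).card
            * (f x : ℕ) := by
    intro x y hxy
    have hvx : ∀ v ∈ R, v ≠ x := by
      intro v hv
      rcases hxy with ⟨hx, _⟩ | ⟨hx, _⟩
      · subst hx; exact ((hmemR v).mp hv).1
      · subst hx; exact ((hmemR v).mp hv).2
    have hvy : ∀ v ∈ R, v ≠ y := by
      intro v hv
      rcases hxy with ⟨_, hy⟩ | ⟨_, hy⟩ <;> subst hy
      · exact ((hmemR v).mp hv).2
      · exact ((hmemR v).mp hv).1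
    have hcard : (Finset.univ.filter (fun v : Fin N => G.Adj x v ∧ v ≠ y ∧ t v = 1)).card
        = ∑ v ∈ R, (if G.Adj x v then 1 else 0) * (f v : ℕ) := by
      rw [Finset.card_filter]
      rw [split (fun v => if G.Adj x v ∧ v ≠ y ∧ t v = 1 then 1 else 0)]
      have hzi : (if G.Adj x i ∧ i ≠ y ∧ t i = 1 then (1:ℕ) else 0) = 0 := by
        rcases hxy with ⟨hx, hy⟩ | ⟨hx, hy⟩ <;> subst hx <;> subst hy
        · simp
        · simp
      have hzj : (if G.Adj x j ∧ j ≠ y ∧ t j = 1 then (1:ℕ) else 0) = 0 := by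
        rcases hxy with ⟨hx, hy⟩ | ⟨hx, hy⟩ <;> subst hx <;> subst hy
        · simp
        · simp
      rw [hzi, hzj, zero_add, zero_add]
      refine Finset.sum_congr rfl fun v hv => ?_
      have h1 := (hmemR v).mp hv
      have hfv : f v = t v := hft v h1.1 h1.2
      by_cases ha : G.Adj x v
      · simp only [ha, true_and, if_true, one_mul, hvy v hv, ne_eq, not_false_iff,
          ← hfv]
        exact stmt17_fin2_ite1 _
      · simp [ha]
    rw [hcard, Finset.sum_mul, ← Finset.sum_add_distrib]
    refine Finset.sum_congr rfl fun v hv => ?_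
    have h1 : F x v + F v x
        = (stmt17eN G x v + stmt17eN G v x) * ((f x : ℕ) * (f v : ℕ)) := by
      simp only [hF]; ring
    rw [h1, hpair x v (hvx v hv)]
    ring
  have hMi := hM i j (Or.inl ⟨rfl, rfl⟩)
  have hMj := hM j i (Or.inr ⟨rfl, rfl⟩)
  have hC : ∑ u ∈ R, ∑ v ∈ R, F u v
      = ∑ u ∈ R, ∑ v ∈ R, stmt17eN G u v * ((t u : ℕ) * (t v : ℕ)) := by
    refine Finset.sum_congr rfl fun u hu => Finset.sum_congr rfl fun v hv => ?_
    have h1 := (hmemR u).mp hu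
    have h2 := (hmemR v).mp hv
    simp [hF, hft u h1.1 h1.2, hft v h2.1 h2.2]
  rw [hFii, hFjj, hC]
  linarith [hMi, hMj, hD]

/-- Graph state reduction to a Bell state: projecting all qubits other than two
adjacent vertices i, j (all of which are assumed neighbors of i or j) onto σ_z
eigenstates with outcome string t occurs with probability 1/2^{N−2}, and the
projected state of qubits i, j is, up to a global sign,
(1/√(2^{N−2})) (σ_z^{m_i} ⊗ σ_z^{m_j})(|0+⟩ + |1−⟩)/√2, where m_i (resp. m_j) is the
number of neighbors of i excluding j (resp. of j excluding i) projected onto |1⟩. -/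
theorem stmt17 (N : ℕ) (hN : 2 ≤ N) (G : SimpleGraph (Fin N)) [DecidableRel G.Adj]
    (i j : Fin N) (hij : G.Adj i j)
    (hcov : ∀ v : Fin N, v ≠ i → v ≠ j → G.Adj i v ∨ G.Adj j v)
    (t : Fin N → Fin 2) :
    (∑ f : Fin N → Fin 2,
        ‖(if ∀ v, v ≠ i → v ≠ j → f v = t v then graphStateCF N G f else 0 : ℂ)‖ ^ 2)
      = 1 / 2 ^ (N - 2) ∧
    ∃ s : ℂ, (s = 1 ∨ s = -1) ∧
      (fun f : Fin N → Fin 2 =>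
          (if ∀ v, v ≠ i → v ≠ j → f v = t v then graphStateCF N G f else 0 : ℂ))
        = fun f =>
          if ∀ v, v ≠ i → v ≠ j → f v = t v then
            s * (1 / Real.sqrt (2 ^ (N - 2)) : ℂ) *
              (-1 : ℂ) ^ ((Finset.univ.filter
                  (fun v : Fin N => G.Adj i v ∧ v ≠ j ∧ t v = 1)).card * (f i : ℕ)) *
              (-1 : ℂ) ^ ((Finset.univ.filter
                  (fun v : Fin N => G.Adj j v ∧ v ≠ i ∧ t v = 1)).card * (f j : ℕ)) *
              ((1/2 : ℂ) * (if f i = 1 ∧ f j = 1 then -1 else 1))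
          else 0 := by
  have hne : i ≠ j := hij.ne
  have hnorm : ∀ f : Fin N → Fin 2, ‖graphStateCF N G f‖ ^ 2 = 1 / 2 ^ N := by
    intro f
    unfold graphStateCF
    rw [norm_mul, norm_pow, norm_neg, norm_one, one_pow, mul_one, norm_div, norm_one,
      Complex.norm_real, Real.norm_eq_abs, abs_of_nonneg (Real.sqrt_nonneg _), div_pow,
      one_pow, Real.sq_sqrt (by positivity)]
  have hcard4 : (Finset.univ.filter
      (fun f : Fin N → Fin 2 => ∀ v, v ≠ i → v ≠ j → f v = t v)).card = 4 := by
    rw [show (4 : ℕ) = (Finset.univ : Finset (Fin 2 × Fin 2)).card by simp]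
    apply Finset.card_bij' (fun f _ => (f i, f j))
      (fun p _ => Function.update (Function.update t i p.1) j p.2)
    case hi => intro f hf; simp
    case hj =>
      intro p _
      simp only [Finset.mem_filter, Finset.mem_univ, true_and]
      intro v hvi hvj
      simp [Function.update, hvi, hvj]
    case left_inv =>
      intro f hf
      simp only [Finset.mem_filter, Finset.mem_univ, true_and] at hf
      funext v
      by_cases hvj : v = j
      · subst hvj; simp [Function.update]
      · by_cases hvi : v = i
        · subst hvi; simp [Function.update, hne, hvj]
        · simp [Function.update, hvi, hvj, (hf v hvi hvj).symm]
    case right_inv =>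
      intro p _
      simp [Function.update, hne]
  have hsqrt : (1 / ((Real.sqrt (2 ^ N) : ℝ) : ℂ))
      = (1 / ((Real.sqrt (2 ^ (N - 2)) : ℝ) : ℂ)) * (1/2) := by
    have h : Real.sqrt (2 ^ N) = 2 * Real.sqrt (2 ^ (N - 2)) := by
      have hNe : N - 2 + 2 = N := Nat.sub_add_cancel hN
      have h2 : (2:ℝ) ^ N = 2 ^ (N - 2) * 2 ^ 2 := by
        conv_lhs => rw [← hNe]
        rw [pow_add]
      rw [h2, Real.sqrt_mul (by positivity), Real.sqrt_sq (by norm_num : (0:ℝ) ≤ 2)]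
      ring
    rw [h]
    push_cast
    rw [one_div, one_div, one_div, mul_inv]
    ring
  have hpowab : ∀ a b : Fin 2,
      ((-1 : ℂ)) ^ ((a : ℕ) * (b : ℕ)) = if a = 1 ∧ b = 1 then -1 else 1 := by
    have h : ∀ x : Fin 2, x = 0 ∨ x = 1 := by decide
    intro a b
    rcases h a with ha | ha <;> rcases h b with hb | hb <;> subst ha <;> subst hb <;>
      norm_num
  constructor
  · have hstep : (∑ f : Fin N → Fin 2,
        ‖(if ∀ v, v ≠ i → v ≠ j → f v = t v then graphStateCF N G f else 0 : ℂ)‖ ^ 2)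
        = ∑ f : Fin N → Fin 2,
            (if ∀ v, v ≠ i → v ≠ j → f v = t v then (1 / 2 ^ N : ℝ) else 0) := by
      refine Finset.sum_congr rfl fun f _ => ?_
      by_cases h : ∀ v, v ≠ i → v ≠ j → f v = t v
      · rw [if_pos h, if_pos h, hnorm f]
      · rw [if_neg h, if_neg h]
        simp
    rw [hstep, ← Finset.sum_filter]
    rw [Finset.sum_const, hcard4, nsmul_eq_mul]
    have hNe : N - 2 + 2 = N := Nat.sub_add_cancel hN
    have h2 : (2:ℝ) ^ N = 2 ^ (N - 2) * 2 ^ 2 := by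
      conv_lhs => rw [← hNe]
      rw [pow_add]
    rw [h2]
    have hpos : (0:ℝ) < 2 ^ (N - 2) := by positivity
    field_simp
    ring
  · refine ⟨(-1 : ℂ) ^ (∑ u ∈ Finset.univ \ ({i, j} : Finset (Fin N)),
        ∑ v ∈ Finset.univ \ ({i, j} : Finset (Fin N)),
          stmt17eN G u v * ((t u : ℕ) * (t v : ℕ))), ?_, ?_⟩
    · rcases Nat.even_or_odd (∑ u ∈ Finset.univ \ ({i, j} : Finset (Fin N)),
          ∑ v ∈ Finset.univ \ ({i, j} : Finset (Fin N)),
            stmt17eN G u v * ((t u : ℕ) * (t v : ℕ))) with h | h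
      · left; exact h.neg_one_pow
      · right; exact h.neg_one_pow
    · funext f
      by_cases h : ∀ v, v ≠ i → v ≠ j → f v = t v
      · rw [if_pos h, if_pos h]
        unfold graphStateCF
        rw [stmt17_key N G i j hij t f h]
        rw [pow_add, pow_add, pow_add, hsqrt, hpowab (f i) (f j)]
        ring
      · rw [if_neg h, if_neg h]
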